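/- Let n, b ∈ ℤ⁺ with 0 ≤ b ≤ 2n and set a = n^2 + b, and let k be the least integer strictly greater than (n+√(a+1))/(b+1). Then there exists an integer strictly between (n+√(a+1))/(b+1) and (n+√a)/b if and only if there exists an integer strictly between k√a and k√(a+1). -/
import Mathlib


theorem stmt_18 (n b a : ℕ) (k : ℤ) (hn : 0 < n) (hb : 1 ≤ b) (hb2 : b ≤ 2*n)
    (hab : a = n^2 + b) (hns : ¬ ∃ r : ℕ, a = r^2)
    (hk1 : ((n : ℝ) + Real.sqrt (a+1)) / (b+1) < (k : ℝ))
    (hk2 : ∀ j : ℤ, ((n : ℝ) + Real.sqrt (a+1)) / (b+1) < (j : ℝ) → k ≤ j) :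
    (∃ j : ℤ, ((n : ℝ) + Real.sqrt (a+1)) / (b+1) < (j : ℝ) ∧
        (j : ℝ) < ((n : ℝ) + Real.sqrt a) / b) ↔
    (∃ m : ℤ, (k : ℝ) * Real.sqrt a < (m : ℝ) ∧
        (m : ℝ) < (k : ℝ) * Real.sqrt (a+1)) := by
  have hbR : (1:ℝ) ≤ (b:ℝ) := by exact_mod_cast hb
  have hnR : (0:ℝ) < (n:ℝ) := by exact_mod_cast hn
  have hb2R : (b:ℝ) ≤ 2*(n:ℝ) := by exact_mod_cast hb2
  have haR : (a:ℝ) = (n:ℝ)^2 + (b:ℝ) := by rw [hab]; push_cast; ring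
  set A := Real.sqrt a with hAdef
  set B := Real.sqrt ((a:ℝ)+1) with hBdef
  have hA0 : 0 ≤ A := Real.sqrt_nonneg _
  have hB0 : 0 ≤ B := Real.sqrt_nonneg _
  have hA2 : A^2 = (a:ℝ) := Real.sq_sqrt (by positivity)
  have hB2 : B^2 = (a:ℝ)+1 := Real.sq_sqrt (by positivity)
  have hnA : (n:ℝ) < A := by nlinarith [hA2, haR, hbR]
  have hB1 : B ≤ (n:ℝ)+1 := by nlinarith [hB2]
  have hAB : A < B := by nlinarith
  have hb0 : (0:ℝ) < (b:ℝ) := by linarith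
  have keyB : ((b:ℝ)+1) = (B-n)*(B+n) := by linear_combination -hB2 - haR
  have keyA : (b:ℝ) = (A-n)*(A+n) := by linear_combination -hA2 - haR
  have hBn0 : (0:ℝ) < B + n := by linarith
  have hAn0 : (0:ℝ) < A + n := by linarith
  have lemL : ∀ x : ℝ, ((n:ℝ) + B)/((b:ℝ)+1) < x ↔ x*(n:ℝ) + 1 < x*B := by
    intro x
    rw [div_lt_iff₀ (by linarith)]
    have hx : x*((b:ℝ)+1) = (x*B - x*(n:ℝ))*(B+(n:ℝ)) := by rw [keyB]; ring
    constructor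
    · intro h
      by_contra hc
      push_neg at hc
      have h2 : (x*B - x*(n:ℝ)) ≤ 1 := by linarith
      have h3 := mul_le_mul_of_nonneg_right h2 hBn0.le
      rw [one_mul] at h3
      linarith [hx ▸ h]
    · intro h
      have h2 : (1:ℝ) < x*B - x*(n:ℝ) := by linarith
      have h3 := mul_lt_mul_of_pos_right h2 hBn0
      rw [one_mul] at h3
      linarith [hx ▸ h3]
  have lemU : ∀ x : ℝ, x < ((n:ℝ) + A)/(b:ℝ) ↔ x*A < x*(n:ℝ) + 1 := by
    intro x
    rw [lt_div_iff₀ hb0]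
    have hx : x*(b:ℝ) = (x*A - x*(n:ℝ))*(A+(n:ℝ)) := by rw [keyA]; ring
    constructor
    · intro h
      by_contra hc
      push_neg at hc
      have h2 : (1:ℝ) ≤ x*A - x*(n:ℝ) := by linarith
      have h3 := mul_le_mul_of_nonneg_right h2 hAn0.le
      rw [one_mul] at h3
      linarith [hx ▸ h]
    · intro h
      have h2 : x*A - x*(n:ℝ) < 1 := by linarith
      have h3 := mul_lt_mul_of_pos_right h2 hAn0
      rw [one_mul] at h3
      linarith [hx ▸ h3]
  constructor
  · rintro ⟨j, hj1, hj2⟩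
    have hkj : k ≤ j := hk2 j hj1
    have hkjR : (k:ℝ) ≤ (j:ℝ) := by exact_mod_cast hkj
    have hjU : (j:ℝ)*A < (j:ℝ)*(n:ℝ) + 1 := (lemU _).mp hj2
    have hkL : (k:ℝ)*(n:ℝ) + 1 < (k:ℝ)*B := (lemL _).mp hk1
    refine ⟨k*n+1, ?_, ?_⟩
    · push_cast
      nlinarith [mul_le_mul_of_nonneg_right hkjR (le_of_lt (sub_pos.mpr hnA))]
    · push_cast
      linarith
  · rintro ⟨m, hm1, hm2⟩
    have hL0 : (0:ℝ) < ((n:ℝ) + B)/((b:ℝ)+1) := by positivity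
    have hk0 : (0:ℝ) < (k:ℝ) := lt_trans hL0 hk1
    have hk0z : (0:ℤ) < k := by exact_mod_cast hk0
    have hkL' : (k:ℝ) - 1 ≤ ((n:ℝ) + B)/((b:ℝ)+1) := by
      by_contra h
      push_neg at h
      have h2 := hk2 (k-1) (by push_cast; linarith)
      omega
    have h5 : ((k:ℝ)-1)*B ≤ ((k:ℝ)-1)*(n:ℝ) + 1 := by
      by_contra h
      push_neg at h
      have := (lemL ((k:ℝ)-1)).mpr h
      linarith
    have hkA : (k:ℝ)*(n:ℝ) < (k:ℝ)*A := mul_lt_mul_of_pos_left hnA hk0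
    have hm_lb : k*n < m := by
      have : ((k*n:ℤ):ℝ) < (m:ℝ) := by push_cast; linarith
      exact_mod_cast this
    have hm_ub : m < k*n+2 := by
      have : ((m:ℤ):ℝ) < ((k*n+2:ℤ):ℝ) := by push_cast; linarith [hm2, h5, hB1]
      exact_mod_cast this
    have hmeq : m = k*n+1 := by omega
    refine ⟨k, hk1, ?_⟩
    apply (lemU (k:ℝ)).mpr
    have hmR : (m:ℝ) = (k:ℝ)*(n:ℝ) + 1 := by rw [hmeq]; push_cast; ring
    linarith [hm1]
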